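/- Let C : [0,1] → ℝ³ be C¹, regular, with Lipschitz derivative. Then there exists i₀ such that for all i ≥ i₀ and every k ∈ {1, …, 2ⁱ}, the restriction of C to the chord polygon through the points C((k−1+j/n)/2ⁱ), j = 0, …, n, is simple: the PL curve with these n+1 vertices has injective piecewise linear parametrization. -/

import Mathlib

open InnerProductGeometry

open scoped RealInnerProductSpace

/-- Uniform piecewise linear parametrization over `[0,1]` of the PL curve with
vertices `P 0, P 1, …, P n`. -/
noncomputable def plParam (n : ℕ) (P : ℕ → EuclideanSpace ℝ (Fin 3)) (t : ℝ) :
    EuclideanSpace ℝ (Fin 3) :=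
  let j := min (n - 1) ⌊t * n⌋₊
  P j + (t * n - j) • (P (j + 1) - P j)

lemma plParam_injOn_aux {n : ℕ} (hn : 1 ≤ n) (P : ℕ → EuclideanSpace ℝ (Fin 3))
    (v : EuclideanSpace ℝ (Fin 3))
    (hpos : ∀ j < n, 0 < ⟪P (j + 1) - P j, v⟫) :
    Set.InjOn (plParam n P) (Set.Icc 0 1) := by
  set q : ℕ → ℝ := fun j => ⟪P j, v⟫ with hqdef
  have hq : ∀ j < n, q j < q (j + 1) := by
    intro j hj
    have h := hpos j hj
    rw [inner_sub_left] at h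
    have : q j < q (j + 1) := by simp only [hqdef]; linarith
    exact this
  have hmono : ∀ a b : ℕ, a ≤ b → b ≤ n → q a ≤ q b := by
    intro a b hab hbn
    induction b with
    | zero => simp_all
    | succ b ih =>
      rcases Nat.eq_or_lt_of_le hab with h | h
      · rw [h]
      · exact le_trans (ih (Nat.lt_succ_iff.mp h) (Nat.le_of_succ_le hbn))
          (le_of_lt (hq b (Nat.lt_of_succ_le hbn)))
  have gdef : ∀ u : ℝ, ⟪plParam n P u, v⟫ =
      q (min (n - 1) ⌊u * n⌋₊) +
        (u * n - (min (n - 1) ⌊u * n⌋₊ : ℕ)) *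
          (q (min (n - 1) ⌊u * n⌋₊ + 1) - q (min (n - 1) ⌊u * n⌋₊)) := by
    intro u
    simp only [plParam, inner_add_left, real_inner_smul_left, inner_sub_left, hqdef]
  have key : StrictMonoOn (fun u => ⟪plParam n P u, v⟫) (Set.Icc (0:ℝ) 1) := by
    intro s hs t ht hst
    simp only [gdef]
    set js := min (n - 1) ⌊s * n⌋₊ with hjs
    set jt := min (n - 1) ⌊t * n⌋₊ with hjt
    have hn0 : (0:ℝ) < n := by exact_mod_cast Nat.lt_of_lt_of_le Nat.zero_lt_one hn
    have hsn : 0 ≤ s * n := mul_nonneg hs.1 hn0.le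
    have hjsn : js < n := lt_of_le_of_lt (min_le_left _ _) (Nat.sub_lt (by omega) one_pos)
    have hjtn : jt < n := lt_of_le_of_lt (min_le_left _ _) (Nat.sub_lt (by omega) one_pos)
    have hdjs : 0 < q (js + 1) - q js := sub_pos.mpr (hq js hjsn)
    have hdjt : 0 < q (jt + 1) - q jt := sub_pos.mpr (hq jt hjtn)
    have hstn : s * n < t * n := mul_lt_mul_of_pos_right hst hn0
    have hjle : js ≤ jt :=
      min_le_min le_rfl (Nat.floor_le_floor hstn.le)
    have hjs_le : (js : ℝ) ≤ s * n :=
      le_trans (Nat.cast_le.mpr (min_le_right _ _)) (Nat.floor_le hsn)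
    have hjt_le : (jt : ℝ) ≤ t * n :=
      le_trans (Nat.cast_le.mpr (min_le_right _ _)) (Nat.floor_le (hsn.trans hstn.le))
    rcases Nat.eq_or_lt_of_le hjle with heq | hlt
    · rw [← heq]
      nlinarith [hdjs, hstn]
    · -- js < jt forces ⌊s*n⌋₊ ≤ n - 1, so js = ⌊s*n⌋₊ and s*n - js < 1
      have hfl : ⌊s * n⌋₊ ≤ n - 1 := by
        by_contra hc
        have : js = n - 1 := min_eq_left (le_of_not_ge hc)
        have : jt ≤ n - 1 := min_le_left _ _
        omega
      have hjseq : js = ⌊s * n⌋₊ := min_eq_right hfl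
      have hlt1 : s * n - (js : ℝ) < 1 := by
        have := Nat.lt_floor_add_one (s * n)
        rw [hjseq]; linarith
    -- g s < q (js+1) ≤ q jt ≤ g t
      have h1 : q js + (s * n - (js : ℝ)) * (q (js + 1) - q js) < q (js + 1) := by
        nlinarith [hdjs, hlt1]
      have h2 : q (js + 1) ≤ q jt := hmono _ _ hlt hjtn.le
      nlinarith [hdjt, hjt_le]
  intro s hs t ht hEq
  exact key.injOn hs ht (by rw [hEq])

set_option maxHeartbeats 1000000 in
theorem stmt_14 (C C' : ℝ → EuclideanSpace ℝ (Fin 3)) (γ : ℝ)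
    (hderiv : ∀ t ∈ Set.Icc (0 : ℝ) 1, HasDerivWithinAt C (C' t) (Set.Icc 0 1) t)
    (hcont : ContinuousOn C' (Set.Icc 0 1))
    (hreg : ∀ t ∈ Set.Icc (0 : ℝ) 1, C' t ≠ 0)
    (hlip : ∀ s ∈ Set.Icc (0 : ℝ) 1, ∀ u ∈ Set.Icc (0 : ℝ) 1,
      ‖C' u - C' s‖ ≤ γ * |u - s|)
    (n : ℕ) (hn : 2 ≤ n) :
    ∃ i₀ : ℕ, ∀ i ≥ i₀, ∀ k : ℕ, 1 ≤ k → k ≤ 2 ^ i →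
      Set.InjOn
        (plParam n (fun j => C (((k : ℝ) - 1 + (j : ℝ) / (n : ℝ)) / 2 ^ i)))
        (Set.Icc 0 1) := by
  obtain ⟨x₀, hx₀, hmin'⟩ := isCompact_Icc.exists_isMinOn (f := fun t => ‖C' t‖)
    ⟨0, by norm_num⟩ hcont.norm
  have hmin : ∀ y ∈ Set.Icc (0:ℝ) 1, ‖C' x₀‖ ≤ ‖C' y‖ := fun y hy => hmin' hy
  set m := ‖C' x₀‖ with hm
  have hm0 : 0 < m := norm_pos_iff.mpr (hreg x₀ hx₀)
  set γ' := max γ 0 with hγ'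
  have hγ'0 : 0 ≤ γ' := le_max_right _ _
  obtain ⟨i₀, hi₀⟩ : ∃ i₀ : ℕ, γ' / m < 2 ^ i₀ := pow_unbounded_of_one_lt _ one_lt_two
  refine ⟨i₀, ?_⟩
  intro i hi k hk1 hk2
  set N : ℝ := 2 ^ i with hN
  have hN0 : (0:ℝ) < N := by positivity
  have hγN : γ' / N < m := by
    have h2 : (2:ℝ) ^ i₀ ≤ N := by
      rw [hN]; exact pow_le_pow_right₀ one_le_two hi
    rw [div_lt_iff₀ hN0]
    calc γ' = (γ' / m) * m := by field_simp
    _ < (2 ^ i₀) * m := by nlinarith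
    _ ≤ m * N := by nlinarith
  have hk1' : (1:ℝ) ≤ (k:ℝ) := by exact_mod_cast hk1
  have hk2' : (k:ℝ) ≤ N := by rw [hN]; exact_mod_cast hk2
  have hn0 : (0:ℝ) < n := by
    have : (0:ℕ) < n := by omega
    exact_mod_cast this
  set a₀ : ℝ := ((k:ℝ) - 1) / N with ha₀def
  have ha₀ : a₀ ∈ Set.Icc (0:ℝ) 1 := by
    constructor
    · apply div_nonneg (by linarith) hN0.le
    · rw [div_le_one hN0]; linarith
  set v := C' a₀ with hv
  have hmv : m ≤ ‖v‖ := hmin a₀ ha₀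
  refine plParam_injOn_aux (by omega) _ v ?_
  intro j hj
  have hjn : (j:ℝ) + 1 ≤ n := by exact_mod_cast hj
  simp only [Nat.cast_add, Nat.cast_one]
  set a : ℝ := ((k:ℝ) - 1 + (j:ℝ) / n) / N with hadef
  set b : ℝ := ((k:ℝ) - 1 + ((j:ℝ) + 1) / n) / N with hbdef
  have hba : b - a = 1 / (n * N) := by
    rw [hadef, hbdef]; field_simp; ring
  have hab : a < b := by
    have : 0 < 1 / (n * N) := by positivity
    linarith [hba]
  have hjn0 : (0:ℝ) ≤ (j:ℝ)/n := by positivity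
  have ha₀a : a₀ ≤ a := by
    rw [ha₀def, hadef]; gcongr; linarith
  have hba₀ : b ≤ a₀ + 1/N := by
    rw [ha₀def, hbdef]
    have h1 : ((j:ℝ) + 1)/n ≤ 1 := by
      rw [div_le_one hn0]; linarith
    rw [← add_div ((k:ℝ) - 1) 1]
    gcongr
  have ha0 : 0 ≤ a := le_trans ha₀.1 ha₀a
  have hb1 : b ≤ 1 := by
    have : a₀ + 1/N ≤ 1 := by
      rw [ha₀def]
      rw [← add_div, div_le_one hN0]; linarith
    linarith
  have hsub : Set.Icc a b ⊆ Set.Icc (0:ℝ) 1 := by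
    intro x hx
    exact ⟨le_trans ha0 hx.1, le_trans hx.2 hb1⟩
  -- mean value estimate for F t = C t - t • v
  have hF : ∀ x ∈ Set.Icc a b,
      HasDerivWithinAt (fun t => C t - t • v) (C' x - v) (Set.Icc a b) x := by
    intro x hx
    exact ((hderiv x (hsub hx)).mono hsub).sub
      (by simpa using (hasDerivWithinAt_id x (Set.Icc a b)).smul_const v)
  have hbound : ∀ x ∈ Set.Ico a b, ‖C' x - v‖ ≤ γ' / N := by
    intro x hx
    have hx' : x ∈ Set.Icc a b := Set.Ico_subset_Icc_self hx
    have hxI : x ∈ Set.Icc (0:ℝ) 1 := hsub hx'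
    have habs : |x - a₀| ≤ 1/N := by
      rw [abs_le]
      constructor
      · linarith [hx'.1]
      · linarith [hx'.2]
    calc ‖C' x - v‖ ≤ γ * |x - a₀| := hlip a₀ ha₀ x hxI
    _ ≤ γ' * |x - a₀| := mul_le_mul_of_nonneg_right (le_max_left _ _) (abs_nonneg _)
    _ ≤ γ' * (1/N) := mul_le_mul_of_nonneg_left habs hγ'0
    _ = γ' / N := by ring
  have hFb := norm_image_sub_le_of_norm_deriv_le_segment' hF hbound b
    (Set.right_mem_Icc.mpr hab.le)
  have hdecomp : C b - C a =
      ((fun t => C t - t • v) b - (fun t => C t - t • v) a) + (b - a) • v := by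
    simp only
    module
  have hinner : ⟪C b - C a, v⟫ =
      ⟪(fun t => C t - t • v) b - (fun t => C t - t • v) a, v⟫ + (b - a) * ‖v‖^2 := by
    rw [hdecomp, inner_add_left, real_inner_smul_left, real_inner_self_eq_norm_sq]
  have habs2 := abs_real_inner_le_norm ((fun t => C t - t • v) b - (fun t => C t - t • v) a) v
  have hneg := neg_abs_le ⟪(fun t => C t - t • v) b - (fun t => C t - t • v) a, v⟫
  have hnorm := mul_le_mul_of_nonneg_right hFb (norm_nonneg v)
  have hvpos : 0 < ‖v‖ := lt_of_lt_of_le hm0 hmv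
  have hgood : 0 < (b - a) * (‖v‖ * (‖v‖ - γ' / N)) := by
    apply mul_pos (by linarith)
    apply mul_pos hvpos
    linarith
  show 0 < ⟪C b - C a, v⟫
  rw [hinner]
  nlinarith [hgood, habs2, hneg, hnorm, sub_nonneg.mpr hab.le]
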